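/- Let W ⊆ ℝ^{N×N} be an M-dimensional subspace of matrices. Suppose filters H₁,…,H_D are partitioned into k subsets V₁,…,V_k with W ⊆ Span(Vⱼ) for each j. Let X ∈ ℝ^{N×D} factor as X = ZA with Z ∈ ℝ^{N×k}. Then for any filters H'₁,…,H'_D ∈ W, coefficient matrix A' ∈ ℝ^{k×D}, and weights w' ∈ ℝ^D, there exist weights w ∈ ℝ^D such that Σᵢ wᵢ Hᵢ xᵢ = Σᵢ w'ᵢ H'ᵢ x'ᵢ, where xᵢ, x'ᵢ are the columns of X = ZA and X' = ZA' respectively and each subset Vⱼ mixes only columns expressible through zⱼ. -/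
import Mathlib


open Matrix

/-- Apply to a fixed vector, as a linear map in the matrix argument. -/
def applyVec (N : ℕ) (u : Fin N → ℝ) :
    Matrix (Fin N) (Fin N) ℝ →ₗ[ℝ] (Fin N → ℝ) where
  toFun M := M *ᵥ u
  map_add' M₁ M₂ := by simp [Matrix.add_mulVec]
  map_smul' c M := by simp [Matrix.smul_mulVec]

/-- Proposition 1: with M–k spanned spatial filters H and rank-k input X = Z A whose
columns align with the basis columns of Z by group, adjusting only the channel mixing
weights reproduces any ConvMixer block with filters in W. -/
theorem stmt_2 (N D k M : ℕ)
    (W : Submodule ℝ (Matrix (Fin N) (Fin N) ℝ)) (hW : Module.finrank ℝ W = M)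
    (H : Fin D → Matrix (Fin N) (Fin N) ℝ) (g : Fin D → Fin k)
    (hspan : ∀ j : Fin k, W ≤ Submodule.span ℝ (H '' {i | g i = j}))
    (Z : Matrix (Fin N) (Fin k) ℝ)
    (X : Matrix (Fin N) (Fin D) ℝ) (A : Matrix (Fin k) (Fin D) ℝ) (hXA : X = Z * A)
    (hcol : ∀ i : Fin D, (fun n => X n i) = fun n => Z n (g i))
    (H' : Fin D → Matrix (Fin N) (Fin N) ℝ) (hH' : ∀ i, H' i ∈ W)
    (A' : Matrix (Fin k) (Fin D) ℝ) (w' : Fin D → ℝ) :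
    ∃ w : Fin D → ℝ,
      (∑ i : Fin D, w i • (H i *ᵥ fun n => X n i)) =
        ∑ i : Fin D, w' i • (H' i *ᵥ fun n => (Z * A') n i) := by
  set v : Fin D → (Fin N → ℝ) := fun i => H i *ᵥ fun n => Z n (g i) with hv
  have key : (∑ i : Fin D, w' i • (H' i *ᵥ fun n => (Z * A') n i)) ∈
      Submodule.span ℝ (Set.range v) := by
    apply Submodule.sum_mem
    intro i _
    apply Submodule.smul_mem
    have h1 : (H' i *ᵥ fun n => (Z * A') n i) =
        ∑ j : Fin k, A' j i • (H' i *ᵥ fun n => Z n j) := by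
      funext n
      simp only [Matrix.mulVec, dotProduct, Matrix.mul_apply,
        Finset.sum_apply, Pi.smul_apply, smul_eq_mul, Finset.mul_sum]
      rw [Finset.sum_comm]
      congr 1; funext j; congr 1; funext m; ring
    rw [h1]
    apply Submodule.sum_mem
    intro j _
    apply Submodule.smul_mem
    have h2 : (H' i *ᵥ fun n => Z n j) = applyVec N (fun n => Z n j) (H' i) := rfl
    rw [h2]
    have h3 : H' i ∈ Submodule.span ℝ (H '' {l | g l = j}) := hspan j (hH' i)
    have h4 : applyVec N (fun n => Z n j) (H' i) ∈
        Submodule.map (applyVec N (fun n => Z n j))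
          (Submodule.span ℝ (H '' {l | g l = j})) :=
      Submodule.mem_map_of_mem h3
    rw [Submodule.map_span] at h4
    refine Submodule.span_mono ?_ h4
    rintro _ ⟨_, ⟨l, hl, rfl⟩, rfl⟩
    exact ⟨l, by simp only [hv]; rw [hl]; rfl⟩
  obtain ⟨w, hw⟩ := (Submodule.mem_span_range_iff_exists_fun ℝ).mp key
  refine ⟨w, ?_⟩
  rw [← hw]
  congr 1
  funext i
  rw [hcol i]
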